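/- The diagonal entries of the Jacobian at the q-singularities: with f1(x,y)=a10·x+a01·y, f2(x,y)=b10·x+b01·y and det A = a10·b01 - a01·b10, the Jacobian of X at q1 = ((a01/a10)·β, -β) is lower-triangularizable with eigenvalues f1(p1)·f1(p2)/a10 and β·det A/a10, where p1 = (-α,-β), p2 = (1-α,-β). In particular its determinant equals f1(p1)·f1(p2)·β·det A / a10². -/

import Mathlib

/-- The Jacobian at the q-singularity `q1` is upper triangular with diagonal entries
`f1(p1)f1(p2)/a10` and `β·det A/a10`; in particular its determinant is
`f1(p1)f1(p2)·β·det A / a10²`. -/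
theorem jacobian_at_q1
    (α β a10 a01 b10 b01 : ℝ)
    (ha10 : a10 ≠ 0)
    (X : ℝ × ℝ → ℝ × ℝ)
    (hX : ∀ p : ℝ × ℝ,
      X p = ((p.1 + α) * (p.1 + α - 1) * (a10 * p.1 + a01 * p.2),
             (p.2 + β) * (p.2 + β - 1) * (b10 * p.1 + b01 * p.2)))
    (f1 : ℝ × ℝ → ℝ) (hf1 : ∀ p : ℝ × ℝ, f1 p = a10 * p.1 + a01 * p.2)
    (q1 : ℝ × ℝ) (hq1 : q1 = ((a01 / a10) * β, -β)) :
    ((fderiv ℝ X q1) (1, 0)).1 = f1 (-α, -β) * f1 (1 - α, -β) / a10 ∧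
    ((fderiv ℝ X q1) (1, 0)).2 = 0 ∧
    ((fderiv ℝ X q1) (0, 1)).2 = β * (a10 * b01 - a01 * b10) / a10 ∧
    ((fderiv ℝ X q1) (1, 0)).1 * ((fderiv ℝ X q1) (0, 1)).2
        - ((fderiv ℝ X q1) (0, 1)).1 * ((fderiv ℝ X q1) (1, 0)).2
      = f1 (-α, -β) * f1 (1 - α, -β) * β * (a10 * b01 - a01 * b10) / a10 ^ 2 := by
  have hXf : X = fun p : ℝ × ℝ =>
      ((p.1 + α) * (p.1 + α - 1) * (a10 * p.1 + a01 * p.2),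
       (p.2 + β) * (p.2 + β - 1) * (b10 * p.1 + b01 * p.2)) := funext hX
  subst hXf hq1
  set q : ℝ × ℝ := ((a01 / a10) * β, -β) with hq
  have hA1 : HasFDerivAt (fun p : ℝ × ℝ => p.1 + α)
      (ContinuousLinearMap.fst ℝ ℝ ℝ) q := hasFDerivAt_fst.add_const α
  have hA2 : HasFDerivAt (fun p : ℝ × ℝ => p.1 + α - 1)
      (ContinuousLinearMap.fst ℝ ℝ ℝ) q := hA1.sub_const 1
  have hA3 : HasFDerivAt (fun p : ℝ × ℝ => a10 * p.1 + a01 * p.2)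
      (a10 • ContinuousLinearMap.fst ℝ ℝ ℝ + a01 • ContinuousLinearMap.snd ℝ ℝ ℝ) q :=
    (hasFDerivAt_fst.const_mul a10).add (hasFDerivAt_snd.const_mul a01)
  have hB1 : HasFDerivAt (fun p : ℝ × ℝ => p.2 + β)
      (ContinuousLinearMap.snd ℝ ℝ ℝ) q := hasFDerivAt_snd.add_const β
  have hB2 : HasFDerivAt (fun p : ℝ × ℝ => p.2 + β - 1)
      (ContinuousLinearMap.snd ℝ ℝ ℝ) q := hB1.sub_const 1
  have hB3 : HasFDerivAt (fun p : ℝ × ℝ => b10 * p.1 + b01 * p.2)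
      (b10 • ContinuousLinearMap.fst ℝ ℝ ℝ + b01 • ContinuousLinearMap.snd ℝ ℝ ℝ) q :=
    (hasFDerivAt_fst.const_mul b10).add (hasFDerivAt_snd.const_mul b01)
  have hF := (hA1.mul hA2).mul hA3
  have hG := (hB1.mul hB2).mul hB3
  have hXd := HasFDerivAt.prodMk hF hG
  rw [HasFDerivAt.fderiv (f := fun p : ℝ × ℝ =>
      ((p.1 + α) * (p.1 + α - 1) * (a10 * p.1 + a01 * p.2),
       (p.2 + β) * (p.2 + β - 1) * (b10 * p.1 + b01 * p.2))) hXd]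
  simp only [ContinuousLinearMap.prod_apply, ContinuousLinearMap.add_apply,
    ContinuousLinearMap.coe_smul', Pi.smul_apply, ContinuousLinearMap.coe_fst',
    ContinuousLinearMap.coe_snd', ContinuousLinearMap.smul_apply, hf1, hq,
    smul_eq_mul, Pi.mul_apply]
  refine ⟨?_, ?_, ?_, ?_⟩ <;> first
    | (field_simp; ring)
    | field_simp
    | ring
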